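/- Let k be a field of characteristic 0 and let s ∈ k with s ≠ 0, s ≠ 3, s ≠ −3 (or s transcendental over ℚ). Set S = (1/2)(s/3 + 3/s), and assume S ≠ 1. Define X = (S³ − 93S² + 963S + 4129)/(64(S − 1)) and Y = 3s(s+3)(S⁴ − 140S³ + 4758S² − 13100S + 258481)/(256(s−3)³). Then Y² = X³ − 27(s − 506 + 9/s). (This is the section P⁽¹⁾_φ of the Inose fibration for the singular K3 surface X_{[3,3,3]} arising from the 3-isogeny E₁ → E₂.) -/

import Mathlib

set_option maxHeartbeats 4000000 in
/-- The section `P⁽¹⁾_φ` of the Inose fibration for the singular K3 surface `X_{[3,3,3]}`: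
with `S = (1/2)(s/3 + 3/s)`, the point
`X = (S³-93S²+963S+4129)/(64(S-1))`, `Y = 3s(s+3)(S⁴-140S³+4758S²-13100S+258481)/(256(s-3)³)`
satisfies `Y² = X³ - 27(s - 506 + 9/s)`. -/
theorem section_P1_X333 {k : Type*} [Field k] [CharZero k]
    (s : k) (hs0 : s ≠ 0) (hs3 : s ≠ 3) (hs3' : s ≠ -3)
    (S : k) (hS : S = 1 / 2 * (s / 3 + 3 / s)) (hS1 : S ≠ 1)
    (X Y : k)
    (hX : X = (S ^ 3 - 93 * S ^ 2 + 963 * S + 4129) / (64 * (S - 1)))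
    (hY : Y = 3 * s * (s + 3) *
      (S ^ 4 - 140 * S ^ 3 + 4758 * S ^ 2 - 13100 * S + 258481) / (256 * (s - 3) ^ 3)) :
    Y ^ 2 = X ^ 3 - 27 * (s - 506 + 9 / s) := by
  have hs3'' : s - 3 ≠ 0 := sub_ne_zero.mpr hs3
  have hS1' : S - 1 ≠ 0 := sub_ne_zero.mpr hS1
  have hd1 : (64 : k) * (S - 1) ≠ 0 := mul_ne_zero (by norm_num) hS1'
  have hd2 : (2304 : k) * s ^ 2 * (s - 3) ^ 2 ≠ 0 :=
    mul_ne_zero (mul_ne_zero (by norm_num) (pow_ne_zero _ hs0)) (pow_ne_zero _ hs3'')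
  have hd3 : (256 : k) * (s - 3) ^ 3 ≠ 0 := mul_ne_zero (by norm_num) (pow_ne_zero _ hs3'')
  have hd4 : (110592 : k) * s ^ 3 * (s - 3) ^ 3 ≠ 0 :=
    mul_ne_zero (mul_ne_zero (by norm_num) (pow_ne_zero _ hs0)) (pow_ne_zero _ hs3'')
  -- the avatar of S as a rational function of s, cleared of denominators
  have f1 : 6 * s * S = s ^ 2 + 9 := by
    rw [hS]; field_simp; ring
  -- X as a rational function of s
  set n : k := (s ^ 2 + 9) ^ 3 - 558 * s * (s ^ 2 + 9) ^ 2 + 34668 * s ^ 2 * (s ^ 2 + 9)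
      + 891864 * s ^ 3 with hn
  set q : k := (s ^ 2 + 9) ^ 4 - 840 * s * (s ^ 2 + 9) ^ 3 + 171288 * s ^ 2 * (s ^ 2 + 9) ^ 2
      - 2829600 * s ^ 3 * (s ^ 2 + 9) + 334991376 * s ^ 4 with hq
  have hXs : X = n / (2304 * s ^ 2 * (s - 3) ^ 2) := by
    rw [hX, div_eq_div_iff hd1 hd2, hn]
    linear_combination (3456 * s * S ^ 2 - 2304 * s ^ 2 * S ^ 2 + 384 * s ^ 3 * S ^ 2
      + 5184 * S - 324864 * s * S + 215424 * s ^ 2 * S - 36096 * s ^ 3 * S + 64 * s ^ 4 * S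
      - 5184 + 321408 * s - 11733120 * s ^ 2 + 35712 * s ^ 3 - 64 * s ^ 4) * f1
  have hYs : Y = (s + 3) * q / (110592 * s ^ 3 * (s - 3) ^ 3) := by
    rw [hY, div_eq_div_iff hd3 hd4, hq]
    linear_combination (-4478976 * s ^ 3 * S ^ 3 + 2985984 * s ^ 4 * S ^ 3
      - 331776 * s ^ 6 * S ^ 3 + 55296 * s ^ 7 * S ^ 3 - 6718464 * s ^ 2 * S ^ 2
      + 631535616 * s ^ 3 * S ^ 2 - 418784256 * s ^ 4 * S ^ 2 + 46531584 * s ^ 6 * S ^ 2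
      - 7796736 * s ^ 7 * S ^ 2 + 9216 * s ^ 8 * S ^ 2 - 10077696 * s * S
      + 947303424 * s ^ 2 * S - 21940263936 * s ^ 3 * S + 14312567808 * s ^ 4 * S
      - 1590285312 * s ^ 6 * S + 270867456 * s ^ 7 * S - 1299456 * s ^ 8 * S
      + 1536 * s ^ 9 * S - 15116544 + 1420955136 * s - 32912075520 * s ^ 2
      + 80301321216 * s ^ 3 - 42773101056 * s ^ 4 + 4752566784 * s ^ 6
      - 991374336 * s ^ 7 + 45146880 * s ^ 8 - 216576 * s ^ 9 + 256 * s ^ 10) * f1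
  have f2s : 2304 * s ^ 2 * (s - 3) ^ 2 * X = n := by
    rw [hXs, mul_div_cancel₀ _ hd2]
  have f3s : 110592 * s ^ 3 * (s - 3) ^ 3 * Y = (s + 3) * q := by
    rw [hYs, mul_div_cancel₀ _ hd4]
  have hM : (12230590464 : k) * s ^ 6 * (s - 3) ^ 6 ≠ 0 :=
    mul_ne_zero (mul_ne_zero (by norm_num) (pow_ne_zero _ hs0)) (pow_ne_zero _ hs3'')
  have g1 : s * Y ^ 2 = s * X ^ 3 - 27 * (s ^ 2 - 506 * s + 9) := by
    apply mul_left_cancel₀ hM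
    rw [hn] at f2s
    rw [hq] at f3s
    linear_combination s * (110592 * s ^ 3 * (s - 3) ^ 3 * Y
        + (s + 3) * ((s ^ 2 + 9) ^ 4 - 840 * s * (s ^ 2 + 9) ^ 3
          + 171288 * s ^ 2 * (s ^ 2 + 9) ^ 2 - 2829600 * s ^ 3 * (s ^ 2 + 9)
          + 334991376 * s ^ 4)) * f3s
      - s * ((2304 * s ^ 2 * (s - 3) ^ 2 * X) ^ 2
        + 2304 * s ^ 2 * (s - 3) ^ 2 * X * ((s ^ 2 + 9) ^ 3 - 558 * s * (s ^ 2 + 9) ^ 2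
          + 34668 * s ^ 2 * (s ^ 2 + 9) + 891864 * s ^ 3)
        + ((s ^ 2 + 9) ^ 3 - 558 * s * (s ^ 2 + 9) ^ 2 + 34668 * s ^ 2 * (s ^ 2 + 9)
          + 891864 * s ^ 3) ^ 2) * f2s
  have expand : s * (X ^ 3 - 27 * (s - 506 + 9 / s)) = s * X ^ 3 - 27 * (s ^ 2 - 506 * s + 9) := by
    field_simp
  exact mul_left_cancel₀ hs0 (g1.trans expand.symm)
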